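/- arXiv:0909.5347 — 5 statements merged into one kernel-verified Lean document; each statement's English description precedes it below -/
import Mathlib

section
/- If the span S_n(A) of products of exactly n Kraus operators of a quantum channel E_A equals all of M_D(ℂ), then for every unit vector φ ∈ ℂ^D the operator E_A^n(|φ⟩⟨φ|) has full rank; consequently q(E_A) ≤ i(A). -/
open Matrix
open scoped ComplexOrder

variable {D : ℕ} {ι : Type*} [Fintype ι]

/-- The completely positive map with Kraus operators `A k`. -/
noncomputable def krausMap (A : ι → Matrix (Fin D) (Fin D) ℂ)
    (X : Matrix (Fin D) (Fin D) ℂ) : Matrix (Fin D) (Fin D) ℂ :=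
  ∑ k, A k * X * (A k)ᴴ

/-- The product `A_{w 0} * A_{w 1} * ⋯ * A_{w (n-1)}` of Kraus operators along a word `w`. -/
noncomputable def wordProd (A : ι → Matrix (Fin D) (Fin D) ℂ) {n : ℕ} (w : Fin n → ι) :
    Matrix (Fin D) (Fin D) ℂ :=
  (List.ofFn fun i => A (w i)).prod

/-- `S_n(A)`: the span of all products of exactly `n` Kraus operators. -/
noncomputable def krausSpan (A : ι → Matrix (Fin D) (Fin D) ℂ) (n : ℕ) :
    Submodule ℂ (Matrix (Fin D) (Fin D) ℂ) :=
  Submodule.span ℂ {M | ∃ w : Fin n → ι, M = wordProd A w}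

/-- `H_n(A,φ) = S_n(A)|φ⟩`. -/
noncomputable def krausVecSpan (A : ι → Matrix (Fin D) (Fin D) ℂ) (n : ℕ)
    (φ : Fin D → ℂ) : Submodule ℂ (Fin D → ℂ) :=
  Submodule.span ℂ {v | ∃ w : Fin n → ι, v = wordProd A w *ᵥ φ}

/-- A quantum channel is primitive if some power maps every pure state to a
positive definite (full-rank) operator. -/
def Primitive (A : ι → Matrix (Fin D) (Fin D) ℂ) : Prop :=
  ∃ n, ∀ φ : Fin D → ℂ, φ ≠ 0 →
    ((krausMap A)^[n] (vecMulVec φ (star φ))).PosDef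

/-- `q(E_A)`: the quantum index of primitivity. -/
noncomputable def qIndex (A : ι → Matrix (Fin D) (Fin D) ℂ) : ℕ :=
  sInf {n | ∀ φ : Fin D → ℂ, φ ≠ 0 →
    ((krausMap A)^[n] (vecMulVec φ (star φ))).PosDef}

/-- `i(A)`: the minimal `n` with `S_n(A) = M_D`. -/
noncomputable def iIndex (A : ι → Matrix (Fin D) (Fin D) ℂ) : ℕ :=
  sInf {n | krausSpan A n = ⊤}

/-- Trace preservation, `∑ k, A_k† A_k = 1`. -/
def TracePreserving (A : ι → Matrix (Fin D) (Fin D) ℂ) : Prop :=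
  ∑ k, (A k)ᴴ * A k = 1

section Aux

omit [Fintype ι] in
lemma wordProd_cons' (A : ι → Matrix (Fin D) (Fin D) ℂ) {n : ℕ} (k : ι) (w : Fin n → ι) :
    wordProd A (Fin.cons k w) = A k * wordProd A w := by
  simp [wordProd, List.ofFn_succ]

lemma iterate_krausMap_apply (A : ι → Matrix (Fin D) (Fin D) ℂ) (n : ℕ)
    (X : Matrix (Fin D) (Fin D) ℂ) :
    (krausMap A)^[n] X = ∑ w : Fin n → ι, wordProd A w * X * (wordProd A w)ᴴ := by
  induction n generalizing X with
  | zero =>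
    simp [wordProd]
  | succ n ih =>
    rw [Function.iterate_succ_apply', ih]
    rw [krausMap]
    rw [← Fintype.sum_equiv (Fin.consEquiv fun _ : Fin (n + 1) => ι)
      (fun p : ι × (Fin n → ι) =>
        wordProd A (Fin.cons p.1 p.2) * X * (wordProd A (Fin.cons p.1 p.2))ᴴ)
      (fun w => wordProd A w * X * (wordProd A w)ᴴ) (fun p => rfl)]
    rw [Fintype.sum_prod_type]
    refine Finset.sum_congr rfl fun k _ => ?_
    rw [Finset.mul_sum, Finset.sum_mul]
    refine Finset.sum_congr rfl fun w _ => ?_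
    rw [wordProd_cons', conjTranspose_mul]
    simp only [mul_assoc]

omit [Fintype ι] in
lemma conj_vecMulVec (M : Matrix (Fin D) (Fin D) ℂ) (φ : Fin D → ℂ) :
    M * vecMulVec φ (star φ) * Mᴴ = vecMulVec (M *ᵥ φ) (star (M *ᵥ φ)) := by
  have h : star (M *ᵥ φ) = fun j => ((star φ) ᵥ* Mᴴ) j := by rw [star_mulVec]
  rw [h]
  ext i j
  simp only [mul_apply, vecMulVec_apply, mulVec, vecMul, dotProduct, Finset.sum_mul,
    Finset.mul_sum, conjTranspose_apply]
  congr 1; ext a; congr 1; ext b; ring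

omit [Fintype ι] in
lemma vecMulVec_mulVec' (v u x : Fin D → ℂ) :
    vecMulVec v u *ᵥ x = (u ⬝ᵥ x) • v := by
  ext i
  simp only [vecMulVec_apply, mulVec, dotProduct, Pi.smul_apply, smul_eq_mul,
    Finset.sum_mul, Finset.mul_sum]
  congr 1; ext a; ring

omit [Fintype ι] in
lemma star_dot (v x : Fin D → ℂ) : star (star v ⬝ᵥ x) = star x ⬝ᵥ v := by
  simp only [dotProduct, star_sum, Pi.star_apply, star_mul', star_star]
  exact Finset.sum_congr rfl fun a _ => mul_comm _ _

omit [Fintype ι] in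
lemma psd_vecMulVec (v : Fin D → ℂ) : (vecMulVec v (star v)).PosSemidef := by
  refine posSemidef_iff_dotProduct_mulVec.2 ⟨?_, ?_⟩
  · ext i j
    simp only [conjTranspose_apply, vecMulVec_apply, Pi.star_apply, star_mul', star_star]
    ring
  · intro x
    rw [vecMulVec_mulVec', dotProduct_smul, smul_eq_mul, ← star_dot v x]
    exact mul_star_self_nonneg _

lemma full_posDef (A : ι → Matrix (Fin D) (Fin D) ℂ) (n : ℕ)
    (hfull : krausSpan A n = ⊤) (φ : Fin D → ℂ) (hφ : φ ≠ 0) :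
    ((krausMap A)^[n] (vecMulVec φ (star φ))).PosDef := by
  set p : (Fin n → ι) → (Fin D → ℂ) := fun w => wordProd A w *ᵥ φ with hp
  have hform : (krausMap A)^[n] (vecMulVec φ (star φ))
      = ∑ w : Fin n → ι, vecMulVec (p w) (star (p w)) := by
    rw [iterate_krausMap_apply]
    exact Finset.sum_congr rfl fun w _ => conj_vecMulVec _ _
  rw [hform]
  have hS : (∑ w : Fin n → ι, vecMulVec (p w) (star (p w))).PosSemidef :=
    Finset.sum_induction _ _ (fun a b ha hb => ha.add hb) Matrix.PosSemidef.zero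
      (fun w _ => psd_vecMulVec _)
  refine posDef_iff_dotProduct_mulVec.2 ⟨hS.1, fun x hx => ?_⟩
  have h1 : (∑ w : Fin n → ι, vecMulVec (p w) (star (p w))) *ᵥ x
      = ∑ w : Fin n → ι, vecMulVec (p w) (star (p w)) *ᵥ x :=
    map_sum (AddMonoidHom.mk' (fun M : Matrix (Fin D) (Fin D) ℂ => M *ᵥ x)
      (fun M N => Matrix.add_mulVec M N x)) _ _
  have h2 : star x ⬝ᵥ (∑ w : Fin n → ι, vecMulVec (p w) (star (p w)) *ᵥ x)
      = ∑ w : Fin n → ι, star x ⬝ᵥ (vecMulVec (p w) (star (p w)) *ᵥ x) :=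
    map_sum (AddMonoidHom.mk' (fun v : Fin D → ℂ => star x ⬝ᵥ v)
      (fun a b => dotProduct_add _ _ _)) _ _
  have hval : star x ⬝ᵥ ((∑ w : Fin n → ι, vecMulVec (p w) (star (p w))) *ᵥ x)
      = ∑ w : Fin n → ι, (star (p w) ⬝ᵥ x) * star (star (p w) ⬝ᵥ x) := by
    rw [h1, h2]
    refine Finset.sum_congr rfl fun w _ => ?_
    rw [vecMulVec_mulVec', dotProduct_smul, smul_eq_mul, ← star_dot (p w) x]
  rw [hval]
  have hnn : ∀ w : Fin n → ι, 0 ≤ (star (p w) ⬝ᵥ x) * star (star (p w) ⬝ᵥ x) :=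
    fun w => mul_star_self_nonneg _
  refine lt_of_le_of_ne (Finset.sum_nonneg fun w _ => hnn w) fun h0 => ?_
  have hall : ∀ w : Fin n → ι, star (p w) ⬝ᵥ x = 0 := by
    intro w
    have hz := (Finset.sum_eq_zero_iff_of_nonneg (fun w _ => hnn w)).1 h0.symm w
      (Finset.mem_univ w)
    rcases mul_eq_zero.1 hz with h | h
    · exact h
    · exact star_eq_zero.1 h
  have hfx : ∀ w : Fin n → ι, star x ⬝ᵥ p w = 0 := fun w => by
    rw [← star_dot, hall w, star_zero]
  let f : (Fin D → ℂ) →ₗ[ℂ] ℂ :=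
    { toFun := fun v => star x ⬝ᵥ v
      map_add' := fun a b => dotProduct_add _ _ _
      map_smul' := fun c a => by simp [dotProduct_smul] }
  let L : Matrix (Fin D) (Fin D) ℂ →ₗ[ℂ] (Fin D → ℂ) :=
    { toFun := fun M => M *ᵥ φ
      map_add' := fun M N => Matrix.add_mulVec M N φ
      map_smul' := fun c M => smul_mulVec c M φ }
  have hc : (star φ ⬝ᵥ φ) ≠ 0 := fun h => hφ (dotProduct_star_self_eq_zero.1 h)
  have hsurj : Function.Surjective L := by
    intro v
    refine ⟨(star φ ⬝ᵥ φ)⁻¹ • vecMulVec v (star φ), ?_⟩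
    show ((star φ ⬝ᵥ φ)⁻¹ • vecMulVec v (star φ)) *ᵥ φ = v
    rw [smul_mulVec, vecMulVec_mulVec', smul_smul, inv_mul_cancel₀ hc, one_smul]
  have hmap : Submodule.span ℂ {v | ∃ w : Fin n → ι, v = p w} = ⊤ := by
    have h1' : Submodule.map L (krausSpan A n)
        = Submodule.span ℂ (L '' {M | ∃ w : Fin n → ι, M = wordProd A w}) := by
      rw [krausSpan, Submodule.map_span]
    rw [hfull, Submodule.map_top, LinearMap.range_eq_top.2 hsurj] at h1'
    have h2' : L '' {M | ∃ w : Fin n → ι, M = wordProd A w}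
        = {v | ∃ w : Fin n → ι, v = p w} := by
      ext v
      constructor
      · rintro ⟨M, ⟨w, rfl⟩, rfl⟩; exact ⟨w, rfl⟩
      · rintro ⟨w, rfl⟩; exact ⟨wordProd A w, ⟨w, rfl⟩, rfl⟩
    rw [h2'] at h1'
    exact h1'.symm
  have hker : Submodule.span ℂ {v | ∃ w : Fin n → ι, v = p w} ≤ LinearMap.ker f := by
    rw [Submodule.span_le]
    rintro v ⟨w, rfl⟩
    exact LinearMap.mem_ker.2 (hfx w)
  rw [hmap] at hker
  have hx0 : f x = 0 := LinearMap.mem_ker.1 (hker Submodule.mem_top)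
  exact hx (dotProduct_star_self_eq_zero.1 hx0)

end Aux

theorem stmt2 (D : ℕ) {ι : Type*} [Fintype ι] (A : ι → Matrix (Fin D) (Fin D) ℂ)
    (hTP : TracePreserving A) (n : ℕ) (hfull : krausSpan A n = ⊤) :
    (∀ φ : Fin D → ℂ, star φ ⬝ᵥ φ = 1 →
        ((krausMap A)^[n] (vecMulVec φ (star φ))).PosDef)
    ∧ qIndex A ≤ iIndex A := by
  constructor
  · intro φ hφ1
    refine full_posDef A n hfull φ fun h => ?_
    rw [h] at hφ1
    simp at hφ1
  · have hne : {m | krausSpan A m = ⊤}.Nonempty := ⟨n, hfull⟩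
    have hmem := Nat.sInf_mem hne
    exact Nat.sInf_le fun φ hφ => full_posDef A (iIndex A) hmem φ hφ
end

section
/- If E_A is a quantum channel such that S_n(A) = M_D(ℂ) for some n (eventually full Kraus rank), then S_m(A) = M_D(ℂ) for all m ≥ n. -/
open Matrix
open scoped ComplexOrder

variable {D : ℕ} {ι : Type*} [Fintype ι]

lemma aux_mul_kraus {D : ℕ} {ι : Type*} [Fintype ι] (A : ι → Matrix (Fin D) (Fin D) ℂ)
    {m : ℕ} {B : Matrix (Fin D) (Fin D) ℂ} (hB : B ∈ krausSpan A m) (k : ι) :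
    B * A k ∈ krausSpan A (m + 1) := by
  induction hB using Submodule.span_induction with
  | mem x hx =>
      obtain ⟨w, rfl⟩ := hx
      apply Submodule.subset_span
      refine ⟨Fin.snoc w k, ?_⟩
      rw [wordProd, wordProd, List.ofFn_succ']
      simp [List.concat_eq_append]
  | zero => rw [zero_mul]; exact zero_mem _
  | add x y _ _ hx hy => rw [add_mul]; exact add_mem hx hy
  | smul c x _ hx => rw [smul_mul_assoc]; exact Submodule.smul_mem _ _ hx

theorem stmt3 (D : ℕ) {ι : Type*} [Fintype ι] (A : ι → Matrix (Fin D) (Fin D) ℂ)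
    (hTP : TracePreserving A) (n : ℕ) (hfull : krausSpan A n = ⊤) :
    ∀ m, n ≤ m → krausSpan A m = ⊤ := by
  intro m hm
  induction m with
  | zero => rwa [Nat.le_zero.mp hm] at hfull
  | succ m ih =>
      rcases Nat.lt_or_ge n (m + 1) with h | h
      · have hSm : krausSpan A m = ⊤ := ih (Nat.lt_succ_iff.mp h)
        rw [eq_top_iff]
        intro X _
        have hX : X = ∑ k, (X * (A k)ᴴ) * A k := by
          calc X = X * 1 := (mul_one X).symm
          _ = X * ∑ k, (A k)ᴴ * A k := by rw [hTP]
          _ = ∑ k, (X * (A k)ᴴ) * A k := by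
              rw [Finset.mul_sum]; simp [mul_assoc]
        rw [hX]
        exact Submodule.sum_mem _ fun k _ =>
          aux_mul_kraus A (hSm ▸ Submodule.mem_top) k
      · rwa [le_antisymm hm h] at hfull
end

section
/- For the quantum channel on M_2(ℂ) with Kraus operators σ_x/√3, σ_y/√3, σ_z/√3 (the Pauli matrices), we have q(E) = 1 but i(A) = 2; in particular q(E_A) < i(A) is possible. -/
open Matrix
open scoped ComplexOrder

variable {D : ℕ} {ι : Type*} [Fintype ι]

/-- The three Pauli matrices, each normalized by `1/√3`. -/
noncomputable def pauliKraus : Fin 3 → Matrix (Fin 2) (Fin 2) ℂ :=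
  ((Real.sqrt 3 : ℂ))⁻¹ • ![!![0, 1; 1, 0], !![0, -Complex.I; Complex.I, 0], !![1, 0; 0, -1]]

/-! ### Auxiliary lemmas -/

lemma sqrt3_sq' : ((Real.sqrt 3 : ℝ) : ℂ) * ((Real.sqrt 3 : ℝ) : ℂ) = 3 := by
  rw [← Complex.ofReal_mul, Real.mul_self_sqrt (by norm_num)]; norm_num

lemma inv3_sq' : (((Real.sqrt 3 : ℝ) : ℂ))⁻¹ ^ 2 = (3:ℂ)⁻¹ := by
  rw [sq, ← mul_inv, sqrt3_sq']

lemma kraus_eval (X : Matrix (Fin 2) (Fin 2) ℂ) :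
    krausMap pauliKraus X
      = (3:ℂ)⁻¹ • !![X 0 0 + 2*X 1 1, -(X 0 1); -(X 1 0), 2*X 0 0 + X 1 1] := by
  show (∑ k : Fin 3, pauliKraus k * X * (pauliKraus k)ᴴ) = _
  ext i j
  fin_cases i <;> fin_cases j <;>
    simp [pauliKraus, Fin.sum_univ_three, Matrix.mul_apply, Fin.sum_univ_two,
      Matrix.vecMul, dotProduct, Matrix.conjTranspose_apply] <;>
    ring_nf <;> rw [inv3_sq'] <;> (try simp only [Complex.I_sq]) <;> ring

lemma pauli_posdef (φ : Fin 2 → ℂ) (hφ : φ ≠ 0) :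
    (krausMap pauliKraus (vecMulVec φ (star φ))).PosDef := by
  rw [kraus_eval]
  obtain ⟨i, hi⟩ := Function.ne_iff.mp hφ
  have hφ2 : 0 < Complex.normSq (φ 0) + Complex.normSq (φ 1) := by
    fin_cases i
    · exact add_pos_of_pos_of_nonneg (Complex.normSq_pos.2 hi) (Complex.normSq_nonneg _)
    · exact add_pos_of_nonneg_of_pos (Complex.normSq_nonneg _) (Complex.normSq_pos.2 hi)
  rw [Matrix.posDef_iff_dotProduct_mulVec]
  constructor
  · ext i j
    fin_cases i <;> fin_cases j <;>
      simp [Matrix.conjTranspose_apply, Matrix.vecMulVec_apply, Complex.ext_iff] <;>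
      (try ring) <;> exact ⟨trivial, trivial⟩
  · intro x hx
    obtain ⟨j, hj⟩ := Function.ne_iff.mp hx
    have hx2 : 0 < Complex.normSq (x 0) + Complex.normSq (x 1) := by
      fin_cases j
      · exact add_pos_of_pos_of_nonneg (Complex.normSq_pos.2 hj) (Complex.normSq_nonneg _)
      · exact add_pos_of_nonneg_of_pos (Complex.normSq_nonneg _) (Complex.normSq_pos.2 hj)
    rw [Complex.lt_def]
    simp only [Complex.normSq_apply] at hφ2 hx2
    constructor
    · simp [dotProduct, Matrix.mulVec, Matrix.vecMulVec_apply, Fin.sum_univ_two,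
        Complex.add_re, Complex.mul_re, Complex.mul_im, Complex.add_im]
      nlinarith [mul_pos hφ2 hx2,
        sq_nonneg ((φ 0).re*(x 1).re - (φ 0).im*(x 1).im - (φ 1).re*(x 0).re + (φ 1).im*(x 0).im),
        sq_nonneg ((φ 0).re*(x 1).im + (φ 0).im*(x 1).re - (φ 1).re*(x 0).im - (φ 1).im*(x 0).re)]
    · simp [dotProduct, Matrix.mulVec, Matrix.vecMulVec_apply, Fin.sum_univ_two,
        Complex.add_re, Complex.mul_re, Complex.mul_im, Complex.add_im]
      ring

lemma qIndex_zero_not : ¬ (∀ φ : Fin 2 → ℂ, φ ≠ 0 →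
    ((krausMap pauliKraus)^[0] (vecMulVec φ (star φ))).PosDef) := by
  intro h
  have h1 : (![1, 0] : Fin 2 → ℂ) ≠ 0 := by
    intro h'; have := congrFun h' 0; simp at this
  have hpd := h ![1, 0] h1
  simp only [Function.iterate_zero, id_eq] at hpd
  have h2 : (![0, 1] : Fin 2 → ℂ) ≠ 0 := by
    intro h'; have := congrFun h' 1; simp at this
  have := (Matrix.posDef_iff_dotProduct_mulVec.mp hpd).2 h2
  have hz : dotProduct (star (![0, 1] : Fin 2 → ℂ))
      (vecMulVec (![1, 0] : Fin 2 → ℂ) (star ![1, 0]) *ᵥ ![0, 1]) = 0 := by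
    simp [dotProduct, Matrix.mulVec, Matrix.vecMulVec_apply, Fin.sum_univ_two]
  rw [hz] at this
  exact lt_irrefl _ this

lemma wordProd_two' (a b : Fin 3) :
    wordProd pauliKraus ![a, b] = pauliKraus a * pauliKraus b := by
  simp [wordProd, List.ofFn_succ]

lemma prod00' : pauliKraus 0 * pauliKraus 0 = (3:ℂ)⁻¹ • 1 := by
  ext i j
  fin_cases i <;> fin_cases j <;>
    simp [pauliKraus, Matrix.mul_apply, Fin.sum_univ_two, Matrix.one_apply] <;>
    ring_nf <;> (try rw [inv3_sq']) <;> (try norm_num [Complex.I_sq]) <;> (try ring)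

lemma prod01' : pauliKraus 0 * pauliKraus 1
    = ((3:ℂ)⁻¹ * Complex.I) • !![1, 0; 0, -1] := by
  ext i j
  fin_cases i <;> fin_cases j <;>
    simp [pauliKraus, Matrix.mul_apply, Fin.sum_univ_two] <;>
    ring_nf <;> (try rw [inv3_sq']) <;> (try norm_num [Complex.I_sq]) <;> (try ring)

lemma prod12' : pauliKraus 1 * pauliKraus 2
    = ((3:ℂ)⁻¹ * Complex.I) • !![0, 1; 1, 0] := by
  ext i j
  fin_cases i <;> fin_cases j <;>
    simp [pauliKraus, Matrix.mul_apply, Fin.sum_univ_two] <;>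
    ring_nf <;> (try rw [inv3_sq']) <;> (try norm_num [Complex.I_sq]) <;> (try ring)

lemma prod20' : pauliKraus 2 * pauliKraus 0
    = ((3:ℂ)⁻¹ * Complex.I) • !![0, -Complex.I; Complex.I, 0] := by
  ext i j
  fin_cases i <;> fin_cases j <;>
    simp [pauliKraus, Matrix.mul_apply, Fin.sum_univ_two] <;>
    ring_nf <;> (try rw [inv3_sq']) <;> (try norm_num [Complex.I_sq]) <;> (try ring)

lemma word_mem (w : Fin 2 → Fin 3) : wordProd pauliKraus w ∈ krausSpan pauliKraus 2 :=
  Submodule.subset_span ⟨w, rfl⟩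

lemma one_mem_span2 : (1 : Matrix (Fin 2) (Fin 2) ℂ) ∈ krausSpan pauliKraus 2 := by
  have h : (1 : Matrix (Fin 2) (Fin 2) ℂ) = (3:ℂ) • wordProd pauliKraus ![0,0] := by
    rw [wordProd_two', prod00', smul_smul]; norm_num
  rw [h]; exact Submodule.smul_mem _ _ (word_mem _)

lemma pz_mem_span2 : (!![1, 0; 0, -1] : Matrix (Fin 2) (Fin 2) ℂ) ∈ krausSpan pauliKraus 2 := by
  have h : (!![1, 0; 0, -1] : Matrix (Fin 2) (Fin 2) ℂ)
      = (-(3:ℂ) * Complex.I) • wordProd pauliKraus ![0,1] := by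
    rw [wordProd_two', prod01', smul_smul]
    have h1 : (-(3:ℂ) * Complex.I) * ((3:ℂ)⁻¹ * Complex.I) = 1 := by
      field_simp
      linear_combination (-1:ℂ) * Complex.I_mul_I
    rw [h1, one_smul]
  rw [h]; exact Submodule.smul_mem _ _ (word_mem _)

lemma px_mem_span2 : (!![0, 1; 1, 0] : Matrix (Fin 2) (Fin 2) ℂ) ∈ krausSpan pauliKraus 2 := by
  have h : (!![0, 1; 1, 0] : Matrix (Fin 2) (Fin 2) ℂ)
      = (-(3:ℂ) * Complex.I) • wordProd pauliKraus ![1,2] := by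
    rw [wordProd_two', prod12', smul_smul]
    have h1 : (-(3:ℂ) * Complex.I) * ((3:ℂ)⁻¹ * Complex.I) = 1 := by
      field_simp
      linear_combination (-1:ℂ) * Complex.I_mul_I
    rw [h1, one_smul]
  rw [h]; exact Submodule.smul_mem _ _ (word_mem _)

lemma py_mem_span2 : (!![0, -Complex.I; Complex.I, 0] : Matrix (Fin 2) (Fin 2) ℂ)
    ∈ krausSpan pauliKraus 2 := by
  have h : (!![0, -Complex.I; Complex.I, 0] : Matrix (Fin 2) (Fin 2) ℂ)
      = (-(3:ℂ) * Complex.I) • wordProd pauliKraus ![2,0] := by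
    rw [wordProd_two', prod20', smul_smul]
    have h1 : (-(3:ℂ) * Complex.I) * ((3:ℂ)⁻¹ * Complex.I) = 1 := by
      field_simp
      linear_combination (-1:ℂ) * Complex.I_mul_I
    rw [h1, one_smul]
  rw [h]; exact Submodule.smul_mem _ _ (word_mem _)

lemma e00_mem : Matrix.single (0:Fin 2) (0:Fin 2) (1:ℂ) ∈ krausSpan pauliKraus 2 := by
  have h : Matrix.single (0:Fin 2) (0:Fin 2) (1:ℂ)
      = (2⁻¹:ℂ) • (1 : Matrix (Fin 2) (Fin 2) ℂ) + (2⁻¹:ℂ) • !![1, 0; 0, -1] := by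
    ext a b
    fin_cases a <;> fin_cases b <;>
      simp [Matrix.single, Matrix.one_apply] <;> norm_num
  rw [h]
  exact Submodule.add_mem _ (Submodule.smul_mem _ _ one_mem_span2)
    (Submodule.smul_mem _ _ pz_mem_span2)

lemma e01_mem : Matrix.single (0:Fin 2) (1:Fin 2) (1:ℂ) ∈ krausSpan pauliKraus 2 := by
  have h : Matrix.single (0:Fin 2) (1:Fin 2) (1:ℂ)
      = (2⁻¹:ℂ) • (!![0, 1; 1, 0] : Matrix (Fin 2) (Fin 2) ℂ)
        + (2⁻¹ * Complex.I) • !![0, -Complex.I; Complex.I, 0] := by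
    ext a b
    fin_cases a <;> fin_cases b <;>
      simp [Matrix.single] <;> norm_num [Complex.ext_iff]
  rw [h]
  exact Submodule.add_mem _ (Submodule.smul_mem _ _ px_mem_span2)
    (Submodule.smul_mem _ _ py_mem_span2)

lemma e10_mem : Matrix.single (1:Fin 2) (0:Fin 2) (1:ℂ) ∈ krausSpan pauliKraus 2 := by
  have h : Matrix.single (1:Fin 2) (0:Fin 2) (1:ℂ)
      = (2⁻¹:ℂ) • (!![0, 1; 1, 0] : Matrix (Fin 2) (Fin 2) ℂ)
        + (-(2⁻¹) * Complex.I) • !![0, -Complex.I; Complex.I, 0] := by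
    ext a b
    fin_cases a <;> fin_cases b <;>
      simp [Matrix.single] <;> norm_num [Complex.ext_iff]
  rw [h]
  exact Submodule.add_mem _ (Submodule.smul_mem _ _ px_mem_span2)
    (Submodule.smul_mem _ _ py_mem_span2)

lemma e11_mem : Matrix.single (1:Fin 2) (1:Fin 2) (1:ℂ) ∈ krausSpan pauliKraus 2 := by
  have h : Matrix.single (1:Fin 2) (1:Fin 2) (1:ℂ)
      = (2⁻¹:ℂ) • (1 : Matrix (Fin 2) (Fin 2) ℂ) + (-(2⁻¹):ℂ) • !![1, 0; 0, -1] := by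
    ext a b
    fin_cases a <;> fin_cases b <;>
      simp [Matrix.single, Matrix.one_apply] <;> norm_num
  rw [h]
  exact Submodule.add_mem _ (Submodule.smul_mem _ _ one_mem_span2)
    (Submodule.smul_mem _ _ pz_mem_span2)

lemma std_mem_span2 (i j : Fin 2) :
    Matrix.single i j (1:ℂ) ∈ krausSpan pauliKraus 2 := by
  fin_cases i <;> fin_cases j
  · exact e00_mem
  · exact e01_mem
  · exact e10_mem
  · exact e11_mem

lemma span2_top : krausSpan pauliKraus 2 = ⊤ := by
  rw [eq_top_iff]
  rintro M -
  rw [Matrix.matrix_eq_sum_single M]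
  refine Submodule.sum_mem _ fun i _ => Submodule.sum_mem _ fun j _ => ?_
  have h : Matrix.single i j (M i j) = (M i j) • Matrix.single i j (1:ℂ) := by
    rw [Matrix.smul_single, smul_eq_mul, mul_one]
  rw [h]
  exact Submodule.smul_mem _ _ (std_mem_span2 i j)

lemma span1_ne_top : krausSpan pauliKraus 1 ≠ ⊤ := by
  intro h
  have hle : krausSpan pauliKraus 1
      ≤ LinearMap.ker (Matrix.traceLinearMap (Fin 2) ℂ ℂ) := by
    rw [krausSpan, Submodule.span_le]
    rintro M ⟨w, rfl⟩
    have hw : wordProd pauliKraus w = pauliKraus (w 0) := by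
      simp [wordProd, List.ofFn_succ]
    simp only [SetLike.mem_coe, LinearMap.mem_ker]
    show Matrix.trace (wordProd pauliKraus w) = 0
    rw [hw]
    have : w 0 = 0 ∨ w 0 = 1 ∨ w 0 = 2 := by omega
    rcases this with h' | h' | h' <;> rw [h'] <;>
      simp [pauliKraus, Matrix.trace, Fin.sum_univ_two]
  have h1 : (1 : Matrix (Fin 2) (Fin 2) ℂ) ∈ krausSpan pauliKraus 1 := by
    rw [h]; trivial
  have := hle h1
  rw [LinearMap.mem_ker] at this
  have h2 : Matrix.trace (1 : Matrix (Fin 2) (Fin 2) ℂ) = 2 := by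
    simp [Matrix.trace_one]
  rw [Matrix.traceLinearMap_apply, h2] at this
  norm_num at this

lemma span0_ne_top : krausSpan pauliKraus 0 ≠ ⊤ := by
  intro h
  have hset : {M : Matrix (Fin 2) (Fin 2) ℂ | ∃ w : Fin 0 → Fin 3, M = wordProd pauliKraus w}
      = {1} := by
    ext M
    constructor
    · rintro ⟨w, rfl⟩
      simp [wordProd, List.ofFn]
    · rintro rfl
      exact ⟨Fin.elim0, by simp [wordProd, List.ofFn]⟩
  have hmem : (!![0, 1; 0, 0] : Matrix (Fin 2) (Fin 2) ℂ) ∈ krausSpan pauliKraus 0 := by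
    rw [h]; trivial
  rw [krausSpan, hset, Submodule.mem_span_singleton] at hmem
  obtain ⟨c, hc⟩ := hmem
  have h01 := congrFun (congrFun hc 0) 1
  simp [Matrix.one_apply] at h01

theorem stmt7 : qIndex pauliKraus = 1 ∧ iIndex pauliKraus = 2
    ∧ qIndex pauliKraus < iIndex pauliKraus := by
  have hq : qIndex pauliKraus = 1 := by
    have h1 : (1:ℕ) ∈ {n | ∀ φ : Fin 2 → ℂ, φ ≠ 0 →
        ((krausMap pauliKraus)^[n] (vecMulVec φ (star φ))).PosDef} := by
      intro φ hφ
      simp only [Function.iterate_one]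
      exact pauli_posdef φ hφ
    have hle : qIndex pauliKraus ≤ 1 := Nat.sInf_le h1
    have hmem := Nat.sInf_mem (⟨1, h1⟩ : Set.Nonempty _)
    have hne : qIndex pauliKraus ≠ 0 := by
      intro h0
      exact qIndex_zero_not (h0 ▸ hmem)
    omega
  have hi : iIndex pauliKraus = 2 := by
    have h2 : (2:ℕ) ∈ {n | krausSpan pauliKraus n = ⊤} := span2_top
    have hle : iIndex pauliKraus ≤ 2 := Nat.sInf_le h2
    have hmem := Nat.sInf_mem (⟨2, h2⟩ : Set.Nonempty _)
    have hne0 : iIndex pauliKraus ≠ 0 := fun h0 => span0_ne_top (h0 ▸ hmem)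
    have hne1 : iIndex pauliKraus ≠ 1 := fun h1 => span1_ne_top (h1 ▸ hmem)
    omega
  exact ⟨hq, hi, by omega⟩
end

section
/- If ρ and ρ' are two distinct positive semidefinite fixed points of a quantum channel with ρ positive definite, then there exists ε > 0 such that ρ - ερ' is positive semidefinite but not full rank; consequently the channel has a non-full-rank positive semidefinite fixed point. -/
open Matrix
open scoped ComplexOrder

variable {D : ℕ} {ι : Type*} [Fintype ι]

lemma quadReal {n : Type*} [Fintype n] {M : Matrix n n ℂ} (hM : M.PosSemidef)
    (x : n → ℂ) : star x ⬝ᵥ M *ᵥ x = ((star x ⬝ᵥ M *ᵥ x).re : ℂ) := by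
  have h := hM.dotProduct_mulVec_nonneg x
  rw [Complex.nonneg_iff] at h
  exact Complex.ext rfl (by simp [h.2])

lemma quadSmul {n : Type*} [Fintype n] (M : Matrix n n ℂ) (c : ℂ) (x : n → ℂ) :
    star (c • x) ⬝ᵥ M *ᵥ (c • x) = ((‖c‖^2 : ℝ) : ℂ) * (star x ⬝ᵥ M *ᵥ x) := by
  rw [star_smul, mulVec_smul, smul_dotProduct, dotProduct_smul]
  rw [smul_eq_mul, smul_eq_mul, ← mul_assoc]
  congr 1
  rw [Complex.star_def, ← Complex.normSq_eq_conj_mul_self, Complex.normSq_eq_norm_sq]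

lemma psdSubIff {n : Type*} [Fintype n] {M N : Matrix n n ℂ} (hM : M.PosSemidef)
    (hN : N.PosSemidef) (ε : ℝ) :
    (M - (ε : ℂ) • N).PosSemidef ↔
      ∀ x, ε * (star x ⬝ᵥ N *ᵥ x).re ≤ (star x ⬝ᵥ M *ᵥ x).re := by
  have herm : (M - (ε : ℂ) • N).IsHermitian := by
    have := hM.1
    have := hN.1
    unfold Matrix.IsHermitian at *
    rw [conjTranspose_sub, conjTranspose_smul]
    simp [*, Complex.star_def, Complex.conj_ofReal]
  have hform : ∀ x : n → ℂ, star x ⬝ᵥ (M - (ε : ℂ) • N) *ᵥ x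
      = (((star x ⬝ᵥ M *ᵥ x).re - ε * (star x ⬝ᵥ N *ᵥ x).re : ℝ) : ℂ) := by
    intro x
    have ha := quadReal hM x
    have hb := quadReal hN x
    rw [sub_mulVec, dotProduct_sub, smul_mulVec, dotProduct_smul, smul_eq_mul,
      ha, hb]
    simp only [Complex.ofReal_re]
    push_cast
    ring
  constructor
  · intro h x
    have h2 := h.dotProduct_mulVec_nonneg x
    rw [hform x, Complex.nonneg_iff] at h2
    have := h2.1
    simp only [Complex.ofReal_re] at this
    linarith
  · intro h
    refine .of_dotProduct_mulVec_nonneg herm fun x => ?_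
    rw [hform x, Complex.nonneg_iff]
    constructor
    · simp only [Complex.ofReal_re]
      linarith [h x]
    · simp

lemma quadCont {n : Type*} [Fintype n] (M : Matrix n n ℂ) :
    Continuous fun x : n → ℂ => (star x ⬝ᵥ M *ᵥ x).re := by
  apply Complex.continuous_re.comp
  have : (fun x : n → ℂ => star x ⬝ᵥ M *ᵥ x)
      = fun x => ∑ i, star (x i) * ∑ j, M i j * x j := by
    funext x
    simp [dotProduct, mulVec, Pi.star_apply]
  rw [this]
  apply continuous_finset_sum
  intro i _
  exact ((continuous_star.comp (continuous_apply i)).mul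
    (continuous_finset_sum _ fun j _ => continuous_const.mul (continuous_apply j)))

lemma keyCore {n : Type*} [Fintype n] {M N : Matrix n n ℂ} (hM : M.PosDef)
    (hN : N.PosSemidef) :
    ∃ δ : ℝ, 0 < δ ∧ ∀ x, δ * (star x ⬝ᵥ N *ᵥ x).re ≤ (star x ⬝ᵥ M *ᵥ x).re := by
  set f : (n → ℂ) → ℝ := fun x => (star x ⬝ᵥ M *ᵥ x).re with hf
  set g : (n → ℂ) → ℝ := fun x => (star x ⬝ᵥ N *ᵥ x).re with hg
  by_cases hn : Nonempty n
  · haveI := hn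
    have hne : (Metric.sphere (0 : n → ℂ) 1).Nonempty :=
      NormedSpace.sphere_nonempty.mpr zero_le_one
    obtain ⟨u, hu, humin⟩ := (isCompact_sphere (0 : n → ℂ) 1).exists_isMinOn hne
      (quadCont M).continuousOn
    obtain ⟨v, hv, hvmax⟩ := (isCompact_sphere (0 : n → ℂ) 1).exists_isMaxOn hne
      (quadCont N).continuousOn
    have hu1 : ‖u‖ = 1 := by simpa using hu
    have hu0 : u ≠ 0 := by intro h; rw [h] at hu1; simp at hu1
    have hm : 0 < f u := by
      have := hM.re_dotProduct_pos hu0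
      simpa [hf, RCLike.re_to_complex] using this
    have hC0 : 0 ≤ g v := by
      have := hN.re_dotProduct_nonneg v
      simpa [hg, RCLike.re_to_complex] using this
    refine ⟨f u / (g v + f u), div_pos hm (by linarith), fun x => ?_⟩
    by_cases hx : x = 0
    · simp [hx, hf, hg]
    · have hxn : (0:ℝ) < ‖x‖ := norm_pos_iff.mpr hx
      set w : n → ℂ := ((‖x‖⁻¹ : ℝ) : ℂ) • x with hw
      have hwsph : w ∈ Metric.sphere (0 : n → ℂ) 1 := by
        simp only [Metric.mem_sphere, dist_zero_right, hw, norm_smul, Complex.norm_real,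
          Real.norm_eq_abs, abs_of_pos (inv_pos.mpr hxn)]
        field_simp
      have hxw : x = ((‖x‖ : ℝ) : ℂ) • w := by
        rw [hw, smul_smul]
        rw [← Complex.ofReal_mul, mul_inv_cancel₀ hxn.ne']
        simp
      have hnorm : ‖((‖x‖ : ℝ) : ℂ)‖ ^ 2 = ‖x‖ ^ 2 := by
        rw [Complex.norm_real, Real.norm_eq_abs, abs_of_pos hxn]
      have hfx : f x = ‖x‖^2 * f w := by
        have h1 : star x ⬝ᵥ M *ᵥ x = ((‖x‖^2 : ℝ) : ℂ) * (star w ⬝ᵥ M *ᵥ w) := by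
          conv_lhs => rw [hxw]
          rw [quadSmul, hnorm]
        rw [hf]
        simp only [h1, Complex.re_ofReal_mul]
      have hgx : g x = ‖x‖^2 * g w := by
        have h1 : star x ⬝ᵥ N *ᵥ x = ((‖x‖^2 : ℝ) : ℂ) * (star w ⬝ᵥ N *ᵥ w) := by
          conv_lhs => rw [hxw]
          rw [quadSmul, hnorm]
        rw [hg]
        simp only [h1, Complex.re_ofReal_mul]
      have h1 : f u ≤ f w := humin hwsph
      have h2 : g w ≤ g v := hvmax hwsph
      have h3 : 0 ≤ g w := by
        have := hN.re_dotProduct_nonneg w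
        simpa [hg, RCLike.re_to_complex] using this
      rw [show (star x ⬝ᵥ M *ᵥ x).re = f x from rfl,
        show (star x ⬝ᵥ N *ᵥ x).re = g x from rfl, hfx, hgx]
      have key : f u / (g v + f u) * g w ≤ f u := by
        rw [div_mul_eq_mul_div, div_le_iff₀ (by linarith)]
        nlinarith
      calc f u / (g v + f u) * (‖x‖^2 * g w) = ‖x‖^2 * (f u / (g v + f u) * g w) := by ring
        _ ≤ ‖x‖^2 * f u := by nlinarith [sq_nonneg ‖x‖]
        _ ≤ ‖x‖^2 * f w := by nlinarith [sq_nonneg ‖x‖]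
  · have he : IsEmpty n := not_nonempty_iff.mp hn
    refine ⟨1, one_pos, fun x => ?_⟩
    simp [hf, hg, dotProduct, Finset.univ_eq_empty]

theorem stmt12 (D : ℕ) {ι : Type*} [Fintype ι]
    (A : ι → Matrix (Fin D) (Fin D) ℂ) (hTP : TracePreserving A)
    (ρ ρ' : Matrix (Fin D) (Fin D) ℂ) (hρ : ρ.PosDef) (hρ' : ρ'.PosSemidef)
    (hfix : krausMap A ρ = ρ) (hfix' : krausMap A ρ' = ρ')
    (hns : ∀ c : ℂ, ρ' ≠ c • ρ) :
    (∃ ε : ℝ, 0 < ε ∧ (ρ - (ε : ℂ) • ρ').PosSemidef ∧ ¬ (ρ - (ε : ℂ) • ρ').PosDef)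
    ∧ ∃ σ : Matrix (Fin D) (Fin D) ℂ,
        σ ≠ 0 ∧ σ.PosSemidef ∧ ¬ σ.PosDef ∧ krausMap A σ = σ := by
  classical
  set q : (Fin D → ℂ) → ℝ := fun x => (star x ⬝ᵥ ρ *ᵥ x).re with hq
  set q' : (Fin D → ℂ) → ℝ := fun x => (star x ⬝ᵥ ρ' *ᵥ x).re with hq'
  have hqnn : ∀ x, 0 ≤ q x := fun x => by
    simpa [RCLike.re_to_complex] using hρ.posSemidef.re_dotProduct_nonneg x
  have hq'nn : ∀ x, 0 ≤ q' x := fun x => by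
    simpa [RCLike.re_to_complex] using hρ'.re_dotProduct_nonneg x
  have hρ'0 : ρ' ≠ 0 := fun h => hns 0 (by simp [h])
  -- a vector where the form of ρ' is positive
  have hv : ∃ v : Fin D → ℂ, 0 < q' v := by
    by_contra h
    push_neg at h
    apply hρ'0
    have hz : ∀ v, ρ' *ᵥ v = 0 := by
      intro v
      rw [← hρ'.dotProduct_mulVec_zero_iff v, quadReal hρ' v]
      have : q' v = 0 := le_antisymm (h v) (hq'nn v)
      rw [show (star v ⬝ᵥ ρ' *ᵥ v).re = q' v from rfl, this, Complex.ofReal_zero]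
    ext i j
    have := congrFun (hz (Pi.single j 1)) i
    simpa [mulVec_single] using this
  obtain ⟨v, hvpos⟩ := hv
  set S : Set ℝ := {ε | 0 ≤ ε ∧ ∀ x, ε * q' x ≤ q x} with hS
  have hS0 : (0:ℝ) ∈ S := ⟨le_refl 0, fun x => by simpa using hqnn x⟩
  have hbdd : BddAbove S := by
    refine ⟨q v / q' v, fun ε hε => ?_⟩
    exact (le_div_iff₀ hvpos).2 (hε.2 v)
  obtain ⟨δ, hδpos, hδ⟩ := keyCore hρ hρ'
  have hδS : δ ∈ S := ⟨hδpos.le, hδ⟩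
  set ε₀ : ℝ := sSup S with hε₀
  have hε₀pos : 0 < ε₀ := lt_of_lt_of_le hδpos (le_csSup hbdd hδS)
  have hε₀S : ε₀ ∈ S := by
    refine ⟨hε₀pos.le, fun x => ?_⟩
    rcases eq_or_lt_of_le (hq'nn x) with h|h
    · rw [← h, mul_zero]; exact hqnn x
    · have hle : ε₀ ≤ q x / q' x :=
        csSup_le ⟨0, hS0⟩ (fun ε hε => (le_div_iff₀ h).2 (hε.2 x))
      exact (le_div_iff₀ h).1 hle
  have hPSD : (ρ - (ε₀:ℂ) • ρ').PosSemidef := (psdSubIff hρ.posSemidef hρ' ε₀).2 hε₀S.2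
  have hnPD : ¬ (ρ - (ε₀:ℂ) • ρ').PosDef := by
    intro hPD
    obtain ⟨δ', hδ'pos, hδ'⟩ := keyCore hPD hρ'
    have hmem : ε₀ + δ' ∈ S := by
      refine ⟨by linarith, fun x => ?_⟩
      have h1 := hδ' x
      have h2 : (star x ⬝ᵥ (ρ - (ε₀:ℂ) • ρ') *ᵥ x).re = q x - ε₀ * q' x := by
        rw [sub_mulVec, dotProduct_sub, smul_mulVec, dotProduct_smul, smul_eq_mul]
        simp [Complex.sub_re, Complex.re_ofReal_mul]
        rfl
      rw [h2] at h1
      nlinarith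
    have := le_csSup hbdd hmem
    linarith
  have hne0 : ρ - (ε₀:ℂ) • ρ' ≠ 0 := by
    intro h
    rw [sub_eq_zero] at h
    apply hns ((ε₀:ℂ)⁻¹)
    rw [h, smul_smul, inv_mul_cancel₀ (by exact_mod_cast hε₀pos.ne'), one_smul]
  have hfixσ : krausMap A (ρ - (ε₀:ℂ) • ρ') = ρ - (ε₀:ℂ) • ρ' := by
    have lin : krausMap A (ρ - (ε₀:ℂ) • ρ')
        = krausMap A ρ - (ε₀:ℂ) • krausMap A ρ' := by
      unfold krausMap
      rw [Finset.smul_sum, ← Finset.sum_sub_distrib]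
      apply Finset.sum_congr rfl
      intro k _
      rw [Matrix.mul_sub, Matrix.sub_mul, Matrix.mul_smul, Matrix.smul_mul]
    rw [lin, hfix, hfix']
  exact ⟨⟨ε₀, hε₀pos, hPSD, hnPD⟩,
    ⟨ρ - (ε₀:ℂ) • ρ', hne0, hPSD, hnPD, hfixσ⟩⟩
end

section
/- For D > 2, consider the completely positive map on M_D(ℂ) with Kraus operators A_0 = Σ_{i=0}^{D−1} |i+1 mod D⟩⟨i| (cyclic shift) and A_1 = |1⟩⟨D−1|. Then the span of all products of exactly D(D−1)−1 of these operators has dimension at most D² − 1 (so i(A) ≥ D² − D), while the products of exactly D(D−1) operators span all of M_D(ℂ) (so i(A) = D² − D). -/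
open Matrix
open scoped ComplexOrder

variable {D : ℕ} {ι : Type*} [Fintype ι]

set_option linter.unusedSectionVars false

open Fin.NatCast Fin.CommRing

namespace Stmt18

variable {D : ℕ}

noncomputable def E (i j : Fin D) : Matrix (Fin D) (Fin D) ℂ := single i j 1

section
variable [NeZero D]

lemma cast_Dsub1 : ((D - 1 : ℕ) : Fin D) = -1 := by
  have h : ((D - 1 : ℕ) : Fin D) + 1 = 0 := by
    have h2 : ((D - 1 : ℕ) : Fin D) + 1 = ((D - 1 + 1 : ℕ) : Fin D) := by push_cast; ring
    have h3 : D - 1 + 1 = D := by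
      have := Nat.pos_of_ne_zero (NeZero.ne D); omega
    rw [h2, h3, Fin.natCast_self]
  exact eq_neg_of_add_eq_zero_left h

lemma cast_mod (x : ℕ) : ((x % D : ℕ) : Fin D) = (x : Fin D) := by
  conv_rhs => rw [← Nat.mod_add_div x D]
  push_cast
  rw [Fin.natCast_self]
  ring

lemma dvd_of_cast_eq_zero {x : ℕ} (h : (x : Fin D) = 0) : D ∣ x := by
  have h2 := congrArg Fin.val h
  rw [Fin.val_natCast] at h2
  exact Nat.dvd_of_mod_eq_zero (by simpa using h2)

lemma E_mul_E (i j l : Fin D) : E i j * E j l = E i l := by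
  unfold E
  simpa using single_mul_single_same (c := (1:ℂ)) i j l 1

lemma E_mul_E_ne {i j k l : Fin D} (h : j ≠ k) : E i j * E k l = 0 :=
  single_mul_single_of_ne (c := (1:ℂ)) i j k h 1

lemma one_eq_sum : (1 : Matrix (Fin D) (Fin D) ℂ) = ∑ k : Fin D, E k k := by
  ext x y
  simp only [Matrix.sum_apply, E, single, Matrix.of_apply, Matrix.one_apply]
  rw [Finset.sum_eq_single x]
  · simp [eq_comm]
  · intro k _ hk; simp [hk]
  · simp

variable {A : Fin 2 → Matrix (Fin D) (Fin D) ℂ}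

section
variable (hP : A 0 = ∑ k : Fin D, E (k+1) k)
include hP

lemma P_mul_E (i j : Fin D) : A 0 * E i j = E (i+1) j := by
  rw [hP, Finset.sum_mul, Finset.sum_eq_single i]
  · exact E_mul_E _ _ _
  · intro k _ hk; exact E_mul_E_ne hk
  · simp

lemma E_mul_P (i j : Fin D) : E i j * A 0 = E i (j-1) := by
  rw [hP, Finset.mul_sum, Finset.sum_eq_single (j-1)]
  · have h : (j - 1) + 1 = j := by ring
    rw [h]; exact E_mul_E _ _ _
  · intro k _ hk
    apply E_mul_E_ne
    intro hjk
    exact hk (by rw [hjk]; ring)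
  · simp

lemma Ppow_mul_E (a : ℕ) (i j : Fin D) : (A 0)^a * E i j = E (i + (a : Fin D)) j := by
  induction a with
  | zero => simp
  | succ n ih =>
      rw [pow_succ', mul_assoc, ih, P_mul_E hP]
      congr 1
      push_cast
      ring

lemma E_mul_Ppow (b : ℕ) (i j : Fin D) : E i j * (A 0)^b = E i (j - (b : Fin D)) := by
  induction b with
  | zero => simp
  | succ n ih =>
      rw [pow_succ, ← mul_assoc, ih, E_mul_P hP]
      congr 1
      push_cast
      ring

lemma P_pow_D : (A 0)^D = 1 := by
  calc (A 0)^D = (A 0)^D * 1 := (mul_one _).symm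
    _ = ∑ k : Fin D, (A 0)^D * E k k := by rw [one_eq_sum, Finset.mul_sum]
    _ = ∑ k : Fin D, E k k := by
        refine Finset.sum_congr rfl fun k _ => ?_
        rw [Ppow_mul_E hP]
        congr 1
        simp [Fin.natCast_self]
    _ = 1 := one_eq_sum.symm

variable (hA1 : A 1 = E 1 ((D - 1 : ℕ) : Fin D))
include hA1

lemma classify (l : List (Fin 2)) :
    (List.map A l).prod = (A 0)^l.length ∨ (List.map A l).prod = 0 ∨
    ∃ a m b : ℕ, l.length = a + m*(D-1) + 1 + b ∧
      (List.map A l).prod = E (1 + (a : Fin D)) (((D-1:ℕ) : Fin D) - (b : Fin D)) := by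
  have hD1 : 1 ≤ D := Nat.pos_of_ne_zero (NeZero.ne D)
  induction l with
  | nil => left; simp
  | cons hd tl ih =>
    have hhd : hd = 0 ∨ hd = 1 := by fin_cases hd <;> simp
    rcases hhd with rfl | rfl
    · rcases ih with h | h | ⟨a, m, b, hlen, h⟩
      · left
        rw [List.map_cons, List.prod_cons, h, List.length_cons, ← pow_succ']
      · right; left
        rw [List.map_cons, List.prod_cons, h, mul_zero]
      · right; right
        refine ⟨a+1, m, b, by simp [List.length_cons, hlen]; omega, ?_⟩
        rw [List.map_cons, List.prod_cons, h, P_mul_E hP]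
        congr 1
        push_cast
        ring
    · rcases ih with h | h | ⟨a, m, b, hlen, h⟩
      · right; right
        refine ⟨0, 0, tl.length, by simp only [List.length_cons]; omega, ?_⟩
        rw [List.map_cons, List.prod_cons, h, hA1, E_mul_Ppow hP]
        congr 1
        push_cast
        ring
      · right; left
        rw [List.map_cons, List.prod_cons, h, mul_zero]
      · by_cases hc : ((D-1:ℕ) : Fin D) = 1 + (a : Fin D)
        · right; right
          have hdvd : D ∣ a + 2 := by
            apply dvd_of_cast_eq_zero
            have h0 : ((a : Fin D) + 2 : Fin D) = 0 := by
              rw [show ((a:Fin D) + 2) = (1 + (a:Fin D)) + 1 by ring, ← hc, cast_Dsub1]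
              ring
            push_cast
            rw [← h0]
          obtain ⟨c, hc2⟩ := hdvd
          have hc1 : 1 ≤ c := by
            rcases Nat.eq_zero_or_pos c with rfl | h0
            · simp at hc2
            · exact h0
          refine ⟨D*(c-1), m+1, b, ?_, ?_⟩
          · rw [List.length_cons, hlen]
            zify [hD1, hc1]
            have hc2' : (a : ℤ) + 2 = D * c := by exact_mod_cast hc2
            linear_combination hc2'
          · rw [List.map_cons, List.prod_cons, h, hA1, hc, E_mul_E]
            congr 1
            push_cast [Fin.natCast_self]
            ring
        · right; left
          rw [List.map_cons, List.prod_cons, h, hA1, E_mul_E_ne hc]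

lemma word_exists (hD2 : 2 ≤ D) (a m b : ℕ) :
    ∃ l : List (Fin 2), l.length = a + m*(D-1) + 1 + b ∧
      (List.map A l).prod = E (1 + (a : Fin D)) (((D-1:ℕ) : Fin D) - (b : Fin D)) := by
  have hD1 : 1 ≤ D := Nat.pos_of_ne_zero (NeZero.ne D)
  have h11 : ∀ (m : ℕ) (j : Fin D), (E 1 1 : Matrix (Fin D) (Fin D) ℂ)^m * E 1 j = E 1 j := by
    intro m j
    induction m with
    | zero => simp
    | succ n ih => rw [pow_succ, mul_assoc, E_mul_E, ih]
  have block : ∀ m : ℕ, ∃ l2 : List (Fin 2), l2.length = m*(D-1) ∧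
      (List.map A l2).prod = (E 1 1 : Matrix (Fin D) (Fin D) ℂ)^m := by
    intro m
    induction m with
    | zero => exact ⟨[], by simp, by simp⟩
    | succ n ih =>
      obtain ⟨l2, hlen2, hprod2⟩ := ih
      refine ⟨((1 : Fin 2) :: List.replicate (D-2) 0) ++ l2, ?_, ?_⟩
      · simp only [List.length_append, List.length_cons, List.length_replicate, hlen2]
        obtain ⟨d, rfl⟩ : ∃ d, D = d + 2 := ⟨D - 2, by omega⟩
        have hr : (n+1)*(d+2-1) = n*(d+2-1) + (d+2-1) := by
          have h1 : d + 2 - 1 = d + 1 := by omega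
          rw [h1]; ring
        omega
      · rw [List.map_append, List.prod_append, List.map_cons, List.prod_cons,
          List.map_replicate, List.prod_replicate, hprod2, hA1, E_mul_Ppow hP]
        have h12 : (((D-1:ℕ) : Fin D) - ((D-2 : ℕ) : Fin D)) = 1 := by
          rw [← Nat.cast_sub (show D - 2 ≤ D - 1 by omega)]
          have hs : D - 1 - (D-2) = 1 := by omega
          rw [hs, Nat.cast_one]
        rw [h12, pow_succ']
  obtain ⟨l2, hlen2, hprod2⟩ := block m
  refine ⟨List.replicate a 0 ++ (l2 ++ (1 : Fin 2) :: List.replicate b 0), ?_, ?_⟩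
  · simp only [List.length_append, List.length_cons, List.length_replicate, hlen2]
    omega
  · rw [List.map_append, List.prod_append, List.map_append, List.prod_append,
      List.map_cons, List.prod_cons, List.map_replicate, List.prod_replicate,
      List.map_replicate, List.prod_replicate, hprod2, hA1]
    rw [E_mul_Ppow hP]
    rw [h11, Ppow_mul_E hP]


end

-- the linear functional M ↦ M 0 1 - M (D-1) 0
noncomputable def f [NeZero D] : Matrix (Fin D) (Fin D) ℂ →ₗ[ℂ] ℂ where
  toFun M := M 0 1 - M ((D-1 : ℕ) : Fin D) 0
  map_add' M N := by simp [Matrix.add_apply]; ring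
  map_smul' c M := by simp [Matrix.smul_apply]; ring

lemma f_apply [NeZero D] (M : Matrix (Fin D) (Fin D) ℂ) :
    f M = M 0 1 - M ((D-1 : ℕ) : Fin D) 0 := rfl

lemma f_E [NeZero D] (i j : Fin D) :
    f (E i j) = (if i = 0 ∧ j = 1 then (1:ℂ) else 0)
      - (if i = ((D-1:ℕ) : Fin D) ∧ j = 0 then 1 else 0) := by
  rw [f_apply]
  unfold E
  simp [single]

lemma arith_contra (hD : 2 < D) {m k : ℕ} (hk : 2 ≤ k)
    (h : m*(D-1) + k*D = D*D - D + 1) : False := by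
  obtain ⟨d, rfl⟩ : ∃ d, D = d + 3 := ⟨D - 3, by omega⟩
  have e : d + 3 - 1 = d + 2 := by omega
  rw [e] at h
  have hsq : (d+3)*(d+3) = d*d + 6*d + 9 := by ring
  have h'' : m*(d+2) + k*(d+3) = d*d + 5*d + 7 := by omega
  have hz : (m:ℤ)*(d+2) + k*(d+3) = d*d + 5*d + 7 := by exact_mod_cast h''
  have hγ : (m:ℤ) + 1 = ((d:ℤ)+3) * ((m:ℤ) + k - d - 2) := by linear_combination -hz
  have hm0 : (0:ℤ) ≤ m := Int.natCast_nonneg m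
  have hd0 : (0:ℤ) ≤ d := Int.natCast_nonneg d
  have hk2 : (2:ℤ) ≤ k := by exact_mod_cast hk
  have hγ1 : 1 ≤ (m:ℤ) + k - d - 2 := by nlinarith
  have hm : (d:ℤ) + 2 ≤ m := by nlinarith
  nlinarith

section
variable [NeZero D] {A : Fin 2 → Matrix (Fin D) (Fin D) ℂ}

lemma list_mem (l : List (Fin 2)) : (List.map A l).prod ∈ krausSpan A l.length := by
  apply Submodule.subset_span
  refine ⟨fun i => l.get i, ?_⟩
  rw [wordProd]
  have h : (List.ofFn fun i => A (l.get i)) = List.map A (List.ofFn l.get) :=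
    (List.map_ofFn (f := l.get)).symm
  rw [h, List.ofFn_get]

lemma wordProd_eq (n : ℕ) (w : Fin n → Fin 2) :
    wordProd A w = (List.map A (List.ofFn w)).prod := by
  rw [wordProd, List.map_ofFn]
  rfl

section
variable (hP : A 0 = ∑ k : Fin D, E (k+1) k) (hA1 : A 1 = E 1 ((D - 1 : ℕ) : Fin D))
include hP hA1

lemma ker_bound (hD : 2 < D) : krausSpan A (D*(D-1) - 1) ≤ LinearMap.ker f := by
  rw [krausSpan, Submodule.span_le]
  rintro M ⟨w, rfl⟩
  rw [SetLike.mem_coe, LinearMap.mem_ker, wordProd_eq]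
  rcases classify hP hA1 (List.ofFn w) with h | h | ⟨a, m, b, hlen, h⟩
  · rw [h, List.length_ofFn]
    have hpow : (A 0)^(D*(D-1) - 1) = (A 0)^(D-1) * ((A 0)^D)^(D-2) := by
      rw [← pow_mul, ← pow_add]
      congr 1
      obtain ⟨d, rfl⟩ : ∃ d, D = d + 3 := ⟨D - 3, by omega⟩
      have h1 : (d+3)*(d+2) = d*d + 5*d + 6 := by ring
      have h2 : (d+3)*(d+1) = d*d + 4*d + 3 := by ring
      have h3 : d+3-1 = d+2 := by omega
      have h4 : d+3-2 = d+1 := by omega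
      rw [h3, h4]
      omega
    rw [hpow, P_pow_D hP, one_pow, mul_one]
    have hrep : (A 0)^(D-1) = ∑ k : Fin D, E (k + ((D-1:ℕ) : Fin D)) k := by
      calc (A 0)^(D-1) = (A 0)^(D-1) * 1 := (mul_one _).symm
        _ = ∑ k : Fin D, (A 0)^(D-1) * E k k := by rw [one_eq_sum, Finset.mul_sum]
        _ = ∑ k : Fin D, E (k + ((D-1:ℕ) : Fin D)) k :=
            Finset.sum_congr rfl fun k _ => Ppow_mul_E hP _ _ _
    rw [hrep, map_sum]
    have hterm : ∀ k : Fin D, f (E (k + ((D-1:ℕ):Fin D)) k)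
        = (if k = 1 then (1:ℂ) else 0) - (if k = 0 then 1 else 0) := by
      intro k
      rw [f_E, cast_Dsub1]
      congr 1
      · by_cases hk : k = 1
        · subst hk; simp
        · simp [hk]
      · by_cases hk : k = 0
        · subst hk; simp
        · simp [hk]
    rw [Finset.sum_congr rfl (fun k _ => hterm k), Finset.sum_sub_distrib]
    simp
  · rw [h]; exact map_zero f
  · rw [h, f_E]
    rw [List.length_ofFn] at hlen
    have hDD : D*(D-1) + D = D*D := by
      obtain ⟨d, rfl⟩ : ∃ d, D = d + 3 := ⟨D - 3, by omega⟩
      have h3 : d+3-1 = d+2 := by omega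
      rw [h3]
      ring
    have hcond1 : ¬((1 : Fin D) + (a : Fin D) = 0 ∧ (((D-1:ℕ):Fin D) - (b : Fin D)) = 1) := by
      rintro ⟨h1, h2⟩
      obtain ⟨α, hα⟩ : D ∣ 1 + a := by
        apply dvd_of_cast_eq_zero; push_cast; exact h1
      obtain ⟨β, hβ⟩ : D ∣ b + 2 := by
        apply dvd_of_cast_eq_zero
        have hb : (b : Fin D) = ((D-1:ℕ) : Fin D) - 1 := by rw [← h2]; ring
        push_cast
        rw [hb, cast_Dsub1]
        ring
      have hα1 : α ≠ 0 := by rintro rfl; simp at hα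
      have hβ1 : β ≠ 0 := by rintro rfl; simp at hβ
      have hdist : (α + β)*D = D*α + D*β := by ring
      refine arith_contra hD (m := m) (k := α + β) (by omega) (by omega)
    have hcond2 : ¬((1 : Fin D) + (a : Fin D) = ((D-1:ℕ):Fin D)
        ∧ (((D-1:ℕ):Fin D) - (b : Fin D)) = 0) := by
      rintro ⟨h1, h2⟩
      obtain ⟨α, hα⟩ : D ∣ a + 2 := by
        apply dvd_of_cast_eq_zero
        have ha : ((a : Fin D) + 2 : Fin D) = 0 := by
          rw [show ((a:Fin D) + 2) = (1 + (a:Fin D)) + 1 by ring, h1, cast_Dsub1]; ring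
        push_cast
        rw [← ha]
      obtain ⟨β, hβ⟩ : D ∣ b + 1 := by
        apply dvd_of_cast_eq_zero
        have hb : (b : Fin D) = ((D-1:ℕ) : Fin D) := by
          have := sub_eq_zero.mp h2; rw [this]
        push_cast
        rw [hb, cast_Dsub1]
        ring
      have hα1 : α ≠ 0 := by rintro rfl; simp at hα
      have hβ1 : β ≠ 0 := by rintro rfl; simp at hβ
      have hdist : (α + β)*D = D*α + D*β := by ring
      refine arith_contra hD (m := m) (k := α + β) (by omega) (by omega)
    rw [if_neg hcond1, if_neg hcond2, sub_zero]

lemma E_mem (hD : 2 < D) (i j : Fin D) (hij : ¬(i = 0 ∧ j = 0)) :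
    E i j ∈ krausSpan A (D*(D-1)) := by
  set x := i.val + D - j.val - 1 with hx
  set m := x % D with hm
  set b := D - 1 - j.val with hb
  have hjD : j.val < D := j.isLt
  have hiD : i.val < D := i.isLt
  have hmD : m < D := Nat.mod_lt _ (by omega)
  have hm_eq : m = D - 1 → i.val = j.val := by
    intro hmd
    rcases Nat.lt_or_ge x D with hxD | hxD
    · have h1 : m = x := Nat.mod_eq_of_lt hxD
      omega
    · have hx2 : x - D < D := by omega
      have h1 : m = x - D := by rw [hm, Nat.mod_eq_sub_mod hxD, Nat.mod_eq_of_lt hx2]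
      omega
  have hDD2 : D*D - 2*D = D*(D-2) := by
    obtain ⟨d, hd⟩ : ∃ d, D = d + 3 := ⟨D - 3, by omega⟩
    subst hd
    have h1 : (d+3)*(d+3) = d*d+6*d+9 := by ring
    have h2 : (d+3)*(d+3-2) = d*d+4*d+3 := by
      have h3 : d+3-2 = d+1 := by omega
      rw [h3]; ring
    omega
  have hbound : m*(D-1) ≤ D*D - 2*D + j.val := by
    have h2D : 2*D ≤ D*D := Nat.mul_le_mul_right D (by omega)
    rcases Nat.lt_or_ge m (D-1) with hmlt | hmge
    · have hstep : m*(D-1) ≤ D*(D-2) := by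
        calc m*(D-1) ≤ (D-2)*(D-1) := Nat.mul_le_mul_right _ (by omega)
          _ = (D-1)*(D-2) := by ring
          _ ≤ D*(D-2) := Nat.mul_le_mul_right _ (by omega)
      omega
    · have hmeq : m = D-1 := by omega
      have hj1 : 1 ≤ j.val := by
        rcases Nat.eq_zero_or_pos j.val with h0 | h0
        · exfalso
          apply hij
          have hij2 : i.val = j.val := hm_eq (by omega)
          constructor
          · apply Fin.ext; rw [Fin.val_zero]; omega
          · apply Fin.ext; rw [Fin.val_zero]; omega
        · exact h0
      have hsq : (D-1)*(D-1) ≤ D*D - 2*D + 1 := by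
        obtain ⟨d, hd⟩ : ∃ d, D = d + 3 := ⟨D - 3, by omega⟩
        subst hd
        have h1 : (d+3-1)*(d+3-1) = d*d+4*d+4 := by
          have h3 : d+3-1 = d+2 := by omega
          rw [h3]; ring
        have h2 : (d+3)*(d+3) = d*d+6*d+9 := by ring
        omega
      calc m*(D-1) = (D-1)*(D-1) := by rw [hmeq]
        _ ≤ D*D - 2*D + 1 := hsq
        _ ≤ D*D - 2*D + j.val := by omega
  set a := D*D - 2*D + j.val - m*(D-1) with ha
  obtain ⟨l, hlenl, hprodl⟩ := word_exists hP hA1 (by omega) a m b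
  have hDD : D*(D-1) + D = D*D := by
    obtain ⟨d, hd⟩ : ∃ d, D = d + 3 := ⟨D - 3, by omega⟩
    subst hd
    have h3 : d+3-1 = d+2 := by omega
    rw [h3]; ring
  have htot : a + m*(D-1) + 1 + b = D*(D-1) := by
    have h2D : 2*D ≤ D*D := Nat.mul_le_mul_right D (by omega)
    omega
  have hia : (1 : Fin D) + (a : Fin D) = i := by
    have h1 : ((a : ℕ) : Fin D) = ((D*D - 2*D + j.val : ℕ) : Fin D) - ((m*(D-1) : ℕ) : Fin D) := by
      rw [ha, Nat.cast_sub hbound]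
    have h2 : ((D*D - 2*D + j.val : ℕ) : Fin D) = j := by
      rw [show D*D - 2*D + j.val = D*(D-2) + j.val by omega]
      push_cast [Fin.natCast_self, Fin.cast_val_eq_self]
      ring
    have h3 : ((m*(D-1) : ℕ) : Fin D) = -(m : Fin D) := by
      push_cast [cast_Dsub1]
      ring
    have h4 : ((m : ℕ) : Fin D) = (i : Fin D) - (j : Fin D) - 1 := by
      rw [hm, cast_mod, hx]
      rw [show i.val + D - j.val - 1 = i.val + D - (j.val + 1) by omega]
      rw [Nat.cast_sub (by omega)]
      push_cast [Fin.natCast_self, Fin.cast_val_eq_self]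
      ring
    rw [h1, h2, h3, h4]
    ring
  have hjb : (((D-1:ℕ) : Fin D) - (b : Fin D)) = j := by
    rw [← Nat.cast_sub (show b ≤ D - 1 by omega)]
    rw [show D - 1 - b = j.val by omega, Fin.cast_val_eq_self]
  have hfin := list_mem (A := A) l
  rw [hlenl, htot] at hfin
  rw [← hia, ← hjb, ← hprodl]
  exact hfin

lemma span_top (hD : 2 < D) : krausSpan A (D*(D-1)) = ⊤ := by
  rw [eq_top_iff]
  intro M _
  rw [matrix_eq_sum_single M]
  apply Submodule.sum_mem
  intro i _
  apply Submodule.sum_mem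
  intro j _
  have hsmul : single i j (M i j) = M i j • E i j := by
    unfold E
    ext x y
    simp [single]
  rw [hsmul]
  apply Submodule.smul_mem
  by_cases hij : i = 0 ∧ j = 0
  · obtain ⟨rfl, rfl⟩ := hij
    have hsum : (E 0 0 : Matrix (Fin D) (Fin D) ℂ)
        = 1 - ∑ k ∈ Finset.univ.erase 0, E k k := by
      rw [one_eq_sum, ← Finset.add_sum_erase _ _ (Finset.mem_univ 0)]
      rw [add_sub_cancel_right]
    rw [hsum]
    apply Submodule.sub_mem
    · have h1 : ((List.replicate (D*(D-1)) (0 : Fin 2)).map A).prod = 1 := by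
        rw [List.map_replicate, List.prod_replicate, pow_mul, P_pow_D hP, one_pow]
      have h2 := list_mem (A := A) (List.replicate (D*(D-1)) 0)
      rw [List.length_replicate, h1] at h2
      exact h2
    · apply Submodule.sum_mem
      intro k hk
      exact E_mem hP hA1 hD k k (by
        rintro ⟨h0, -⟩
        exact Finset.ne_of_mem_erase hk h0)
  · exact E_mem hP hA1 hD i j hij

lemma span_succ (n : ℕ) (h : krausSpan A n = ⊤) : krausSpan A (n+1) = ⊤ := by
  have hD1 : 1 ≤ D := Nat.pos_of_ne_zero (NeZero.ne D)
  rw [eq_top_iff]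
  intro M _
  have hM : M = A 0 * ((A 0)^(D-1) * M) := by
    rw [← mul_assoc, ← pow_succ']
    rw [show D - 1 + 1 = D by omega, P_pow_D hP, one_mul]
  rw [hM]
  have hmem : (A 0)^(D-1) * M ∈ krausSpan A n := h ▸ Submodule.mem_top
  refine Submodule.span_induction (p := fun N _ => A 0 * N ∈ krausSpan A (n+1))
    ?_ ?_ ?_ ?_ hmem
  · rintro X ⟨w, rfl⟩
    apply Submodule.subset_span
    refine ⟨Fin.cons 0 w, ?_⟩
    rw [wordProd, wordProd, List.ofFn_succ]
    simp only [Fin.cons_zero, Fin.cons_succ, List.prod_cons]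
  · show A 0 * 0 ∈ krausSpan A (n+1)
    rw [mul_zero]; exact Submodule.zero_mem _
  · intro x y _ _ ihx ihy
    show A 0 * (x + y) ∈ krausSpan A (n+1)
    rw [mul_add]; exact Submodule.add_mem _ ihx ihy
  · intro c x _ ihx
    show A 0 * (c • x) ∈ krausSpan A (n+1)
    rw [mul_smul_comm]; exact Submodule.smul_mem _ _ ihx

lemma span_mono_top {k n : ℕ} (hkn : k ≤ n) (h : krausSpan A k = ⊤) :
    krausSpan A n = ⊤ := by
  induction n, hkn using Nat.le_induction with
  | base => exact h
  | succ n hn ih => exact span_succ hP hA1 n ih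

lemma finrank_bound (hD : 2 < D) :
    Module.finrank ℂ (krausSpan A (D * (D - 1) - 1)) ≤ D ^ 2 - 1 := by
  have hker := ker_bound hP hA1 hD
  have h1 : Module.finrank ℂ (krausSpan A (D*(D-1) - 1))
      ≤ Module.finrank ℂ (LinearMap.ker (f (D := D))) := Submodule.finrank_mono hker
  have h2 : Module.finrank ℂ (LinearMap.range (f (D := D))) = 1 := by
    have hone : (1 : Fin D) ≠ 0 := by
      intro h0
      have := congrArg Fin.val h0
      rw [Fin.val_one'] at this
      simp at this
      omega
    have hsurj : LinearMap.range (f (D := D)) = ⊤ := by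
      rw [LinearMap.range_eq_top]
      intro c
      refine ⟨c • E 0 1, ?_⟩
      rw [_root_.map_smul, f_E]
      rw [if_pos ⟨rfl, rfl⟩, if_neg ?_]
      · simp
      · rintro ⟨-, h0⟩
        exact hone h0
    rw [hsurj, finrank_top, Module.finrank_self]
  have h3 := LinearMap.finrank_range_add_finrank_ker (f (D := D))
  rw [Module.finrank_matrix, Fintype.card_fin, Module.finrank_self, mul_one] at h3
  have h4 : D^2 = D*D := by ring
  omega

end
end
end
end Stmt18

theorem stmt18 (D : ℕ) (hD : 2 < D) (A : Fin 2 → Matrix (Fin D) (Fin D) ℂ)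
    (hA0 : A 0 = Matrix.of fun i j : Fin D => if (i : ℕ) = ((j : ℕ) + 1) % D then 1 else 0)
    (hA1 : A 1 = single (⟨1, by omega⟩ : Fin D) (⟨D - 1, by omega⟩ : Fin D) 1) :
    Module.finrank ℂ (krausSpan A (D * (D - 1) - 1)) ≤ D ^ 2 - 1
    ∧ krausSpan A (D * (D - 1)) = ⊤
    ∧ iIndex A = D ^ 2 - D := by
  haveI : NeZero D := ⟨by omega⟩
  -- reconcile the hypotheses with our normal forms
  have hP : A 0 = ∑ k : Fin D, Stmt18.E (k+1) k := by
    rw [hA0]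
    ext x y
    simp only [Matrix.of_apply, Matrix.sum_apply, Stmt18.E, single]
    rw [Finset.sum_eq_single y]
    · simp only [and_true]
      have hv : ((y + 1 : Fin D) : ℕ) = ((y : ℕ) + 1) % D := by
        rw [Fin.val_add, Fin.val_one', Nat.mod_eq_of_lt (show 1 < D by omega)]
      by_cases hxy : (y + 1 : Fin D) = x
      · rw [if_pos hxy, if_pos]
        rw [← hxy, hv]
      · rw [if_neg hxy, if_neg]
        intro hc
        apply hxy
        apply Fin.ext
        rw [hv]
        omega
    · intro k _ hk
      simp [hk]
    · simp
  have hA1' : A 1 = Stmt18.E 1 ((D - 1 : ℕ) : Fin D) := by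
    have e1 : (⟨1, by omega⟩ : Fin D) = 1 := by
      apply Fin.ext
      rw [Fin.val_one']
      exact (Nat.mod_eq_of_lt (by omega)).symm
    have e2 : (⟨D - 1, by omega⟩ : Fin D) = ((D - 1 : ℕ) : Fin D) := by
      apply Fin.ext
      rw [Fin.val_natCast]
      exact (Nat.mod_eq_of_lt (by omega)).symm
    rw [hA1, e1, e2]
    rfl
  have h1 := Stmt18.finrank_bound hP hA1' hD
  have h2 := Stmt18.span_top hP hA1' hD
  refine ⟨h1, h2, ?_⟩
  have hDsq : D * (D - 1) = D ^ 2 - D := by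
    obtain ⟨d, rfl⟩ : ∃ d, D = d + 3 := ⟨D - 3, by omega⟩
    have e1 : d + 3 - 1 = d + 2 := by omega
    rw [e1]
    have e2 : (d+3)*(d+2) = d*d + 5*d + 6 := by ring
    have e3 : (d+3)^2 = d*d + 6*d + 9 := by ring
    omega
  have hSne : {n | krausSpan A n = ⊤}.Nonempty := ⟨D * (D - 1), h2⟩
  have hle : iIndex A ≤ D ^ 2 - D := by
    rw [iIndex, ← hDsq]
    exact Nat.sInf_le h2
  have hge : D ^ 2 - D ≤ iIndex A := by
    rw [iIndex]
    by_contra hlt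
    push_neg at hlt
    have hmem := Nat.sInf_mem hSne
    set k := sInf {n | krausSpan A n = ⊤} with hk
    have hk1 : k ≤ D * (D - 1) - 1 := by omega
    have htop : krausSpan A (D * (D - 1) - 1) = ⊤ :=
      Stmt18.span_mono_top hP hA1' hk1 hmem
    have hcard : Module.finrank ℂ (krausSpan A (D * (D - 1) - 1)) = D * D := by
      rw [htop, finrank_top, Module.finrank_matrix, Fintype.card_fin,
        Module.finrank_self, mul_one]
    have hsq : D ^ 2 = D * D := by ring
    omega
  omega
end
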